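/- Let B ∈ ℚ[[a,b]] (power series in a and b, with t set to 1 appropriately via the grading) be defined together with R = aB(1+bB)/(1-abB^2) and S = bB(1+aB)/(1-abB^2), where B is the unique series with B = (1+R)(1+S) under the grading giving each of a, b degree 1. Then R = a(1+R)(1+S)^2 and S = b(1+R)^2(1+S), and moreover B - abB^3(1+aB)(1+bB)/(1-abB^2)^2 = (1+R)(1+S)(1 - RS). -/

import Mathlib

/-- With `y = t = 1`: if `B ∈ ℚ[[a,b]]` has constant term 1 and
`R = aB(1+bB)/(1-abB^2)`, `S = bB(1+aB)/(1-abB^2)` (stated multiplicatively; `1-abB^2` is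
invertible), and `B = (1+R)(1+S)`, then `R = a(1+R)(1+S)^2`, `S = b(1+R)^2(1+S)`, and
`B - abB^3(1+aB)(1+bB)/(1-abB^2)^2 = (1+R)(1+S)(1-RS)` (again stated multiplicatively). -/
theorem change_of_variables_RS (B R S : MvPowerSeries (Fin 2) ℚ)
    (hB0 : MvPowerSeries.constantCoeff B = 1)
    (hR : R * (1 - MvPowerSeries.X 0 * MvPowerSeries.X 1 * B ^ 2)
        = MvPowerSeries.X 0 * B * (1 + MvPowerSeries.X 1 * B))
    (hS : S * (1 - MvPowerSeries.X 0 * MvPowerSeries.X 1 * B ^ 2)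
        = MvPowerSeries.X 1 * B * (1 + MvPowerSeries.X 0 * B))
    (hB : B = (1 + R) * (1 + S)) :
    R = MvPowerSeries.X 0 * (1 + R) * (1 + S) ^ 2 ∧
    S = MvPowerSeries.X 1 * (1 + R) ^ 2 * (1 + S) ∧
    B * (1 - MvPowerSeries.X 0 * MvPowerSeries.X 1 * B ^ 2) ^ 2
        - MvPowerSeries.X 0 * MvPowerSeries.X 1 * B ^ 3
          * (1 + MvPowerSeries.X 0 * B) * (1 + MvPowerSeries.X 1 * B)
      = (1 + R) * (1 + S) * (1 - R * S)
          * (1 - MvPowerSeries.X 0 * MvPowerSeries.X 1 * B ^ 2) ^ 2 := by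
  set a : MvPowerSeries (Fin 2) ℚ := MvPowerSeries.X 0
  set b : MvPowerSeries (Fin 2) ℚ := MvPowerSeries.X 1
  set U : MvPowerSeries (Fin 2) ℚ := 1 - a * b * B ^ 2 with hUdef
  have hU : IsUnit U := by
    rw [MvPowerSeries.isUnit_iff_constantCoeff]
    simp [hUdef, a, b, hB0]
  have cancel : ∀ x y : MvPowerSeries (Fin 2) ℚ, x * U = y * U → x = y :=
    fun x y h => hU.mul_right_cancel h
  have h1S : (1 + S) * U = 1 + b * B := by
    linear_combination hS
  have h1R : (1 + R) * U = 1 + a * B := by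
    linear_combination hR
  have key1 : R = a * (1 + R) * (1 + S) ^ 2 := by
    apply cancel
    calc R * U = a * B * (1 + b * B) := hR
    _ = a * B * ((1 + S) * U) := by rw [h1S]
    _ = a * (1 + R) * (1 + S) ^ 2 * U := by rw [hB]; ring
  have key2 : S = b * (1 + R) ^ 2 * (1 + S) := by
    apply cancel
    calc S * U = b * B * (1 + a * B) := hS
    _ = b * B * ((1 + R) * U) := by rw [h1R]
    _ = b * (1 + R) ^ 2 * (1 + S) * U := by rw [hB]; ring
  refine ⟨key1, key2, ?_⟩
  calc B * U ^ 2 - a * b * B ^ 3 * (1 + a * B) * (1 + b * B)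
      = B * U ^ 2 - B * (R * U) * (S * U) := by rw [hR, hS]; ring
    _ = (1 + R) * (1 + S) * (1 - R * S) * U ^ 2 := by rw [hB]; ring
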